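/- For every solution of the four-body system, the relative vectors evolve as pure ω-harmonics: r₁₃(t) = r₁₃(0) cos ωt + (1/(mω)) p₁₃(0) sin ωt and r₂₄(t) = r₂₄(0) cos ωt + (1/(mω)) p₂₄(0) sin ωt for all t ∈ ℝ. -/

import Mathlib

noncomputable section

/-- The Euclidean plane. -/
abbrev Plane : Type := EuclideanSpace ℝ (Fin 2)

/-- A solution of the planar four-body system with pairwise quadratic potential
`V = (mω²/4)(2‖r₁−r₂‖² + 2‖r₂−r₃‖² + 2‖r₃−r₄‖² + 2‖r₁−r₄‖² − ‖r₁−r₃‖² − ‖r₂−r₄‖²)`: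
four twice differentiable curves satisfying Newton's equations
`rᵢ'' = −ω²((rᵢ − r_{i+1}) + (rᵢ − r_{i−1}) − ½(rᵢ − r_{i+2}))` (indices mod 4). -/
def IsFourBodySolution (ω : ℝ) (r₁ r₂ r₃ r₄ : ℝ → Plane) : Prop :=
  (Differentiable ℝ r₁ ∧ Differentiable ℝ (deriv r₁)) ∧
  (Differentiable ℝ r₂ ∧ Differentiable ℝ (deriv r₂)) ∧
  (Differentiable ℝ r₃ ∧ Differentiable ℝ (deriv r₃)) ∧
  (Differentiable ℝ r₄ ∧ Differentiable ℝ (deriv r₄)) ∧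
  (∀ t : ℝ, deriv (deriv r₁) t =
    (-(ω ^ 2)) • ((r₁ t - r₂ t) + (r₁ t - r₄ t) - (1 / 2 : ℝ) • (r₁ t - r₃ t))) ∧
  (∀ t : ℝ, deriv (deriv r₂) t =
    (-(ω ^ 2)) • ((r₂ t - r₃ t) + (r₂ t - r₁ t) - (1 / 2 : ℝ) • (r₂ t - r₄ t))) ∧
  (∀ t : ℝ, deriv (deriv r₃) t =
    (-(ω ^ 2)) • ((r₃ t - r₄ t) + (r₃ t - r₂ t) - (1 / 2 : ℝ) • (r₃ t - r₁ t))) ∧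
  (∀ t : ℝ, deriv (deriv r₄) t =
    (-(ω ^ 2)) • ((r₄ t - r₁ t) + (r₄ t - r₃ t) - (1 / 2 : ℝ) • (r₄ t - r₂ t)))

open Real Set in
lemma harmonic_unique {E : Type*} [NormedAddCommGroup E] [NormedSpace ℝ E]
    (ω : ℝ) (hω : 0 < ω) (x : ℝ → E)
    (hx : Differentiable ℝ x) (hx' : Differentiable ℝ (deriv x))
    (hode : ∀ t, deriv (deriv x) t = (-(ω ^ 2)) • x t) :
    ∀ t : ℝ, x t = Real.cos (ω * t) • x 0 + (Real.sin (ω * t) / ω) • deriv x 0 := by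
  intro t
  set L : (E × E) →L[ℝ] (E × E) :=
    (ContinuousLinearMap.snd ℝ E E).prod ((-(ω ^ 2)) • ContinuousLinearMap.fst ℝ E E) with hL
  have hLip : LipschitzWith ‖L‖₊ L := L.lipschitz
  set f : ℝ → E × E := fun s => (x s, deriv x s) with hf
  set g : ℝ → E × E := fun s =>
    (Real.cos (ω * s) • x 0 + (Real.sin (ω * s) / ω) • deriv x 0,
     (-(ω * Real.sin (ω * s))) • x 0 + Real.cos (ω * s) • deriv x 0) with hg
  have hf' : ∀ s : ℝ, HasDerivAt f (L (f s)) s := by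
    intro s
    have h1 : HasDerivAt x (deriv x s) s := (hx s).hasDerivAt
    have h2 : HasDerivAt (deriv x) (deriv (deriv x) s) s := (hx' s).hasDerivAt
    rw [hode s] at h2
    exact h1.prodMk h2
  have hcos : ∀ s : ℝ, HasDerivAt (fun u : ℝ => Real.cos (ω * u)) (-(ω * Real.sin (ω * s))) s := by
    intro s
    have := (Real.hasDerivAt_cos (ω * s)).comp s ((hasDerivAt_id s).const_mul ω)
    simpa [mul_comm, Function.comp_def] using this
  have hsin : ∀ s : ℝ, HasDerivAt (fun u : ℝ => Real.sin (ω * u) / ω) (Real.cos (ω * s)) s := by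
    intro s
    have := ((Real.hasDerivAt_sin (ω * s)).comp s ((hasDerivAt_id s).const_mul ω)).div_const ω
    simpa [mul_comm, mul_div_assoc, mul_div_cancel_left₀ _ hω.ne'] using this
  have hg' : ∀ s : ℝ, HasDerivAt g (L (g s)) s := by
    intro s
    have h1 : HasDerivAt (fun u : ℝ => Real.cos (ω * u) • x 0 + (Real.sin (ω * u) / ω) • deriv x 0)
        ((-(ω * Real.sin (ω * s))) • x 0 + Real.cos (ω * s) • deriv x 0) s :=
      ((hcos s).smul_const (x 0)).add ((hsin s).smul_const (deriv x 0))
    have h2 : HasDerivAt (fun u : ℝ => (-(ω * Real.sin (ω * u))) • x 0 + Real.cos (ω * u) • deriv x 0)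
        ((-(ω ^ 2 * Real.cos (ω * s))) • x 0 + (-(ω * Real.sin (ω * s))) • deriv x 0) s := by
      have hc : HasDerivAt (fun u : ℝ => -(ω * Real.sin (ω * u))) (-(ω ^ 2 * Real.cos (ω * s))) s := by
        have := (((Real.hasDerivAt_sin (ω * s)).comp s ((hasDerivAt_id s).const_mul ω)).const_mul ω).neg
        exact this.congr_deriv (by ring)
      exact (hc.smul_const (x 0)).add ((hcos s).smul_const (deriv x 0))
    have := h1.prodMk h2
    convert this using 1
    simp only [hL, hg, ContinuousLinearMap.prod_apply, ContinuousLinearMap.coe_snd',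
      ContinuousLinearMap.smul_apply, ContinuousLinearMap.coe_fst']
    refine Prod.ext rfl ?_
    simp only [smul_add, smul_smul]
    ring_nf
    have hss : ω ^ 2 * Real.sin (ω * s) * ω⁻¹ = ω * Real.sin (ω * s) := by
      field_simp
    rw [hss]
  have heq0 : f 0 = g 0 := by
    simp [hf, hg]
  -- uniqueness on a big interval containing t and 0
  have key : f t = g t := by
    rcases le_or_gt 0 t with h | h
    · have := ODE_solution_unique (v := fun _ p => L p) (K := ‖L‖₊) (a := 0) (b := t)
        (fun _ => hLip)
        (fun s _ => ((hf' s).continuousAt).continuousWithinAt)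
        (fun s _ => (hf' s).hasDerivWithinAt)
        (fun s _ => ((hg' s).continuousAt).continuousWithinAt)
        (fun s _ => (hg' s).hasDerivWithinAt) heq0
      exact this (right_mem_Icc.2 h)
    · have := ODE_solution_unique_of_mem_Icc (v := fun _ p => L p) (K := ‖L‖₊)
        (s := fun _ => (univ : Set (E × E))) (t₀ := 0) (a := t - 1) (b := 1)
        (fun _ _ => hLip.lipschitzOnWith)
        (⟨by linarith, by linarith⟩)
        (fun s _ => ((hf' s).continuousAt).continuousWithinAt)
        (fun s _ => hf' s) (fun _ _ => trivial)
        (fun s _ => ((hg' s).continuousAt).continuousWithinAt)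
        (fun s _ => hg' s) (fun _ _ => trivial) heq0
      exact this ⟨by linarith, by linarith⟩
  have := congrArg Prod.fst key
  simpa [hf, hg] using this

/-- For every solution of the four-body system, the relative vectors
`r₁₃` and `r₂₄` evolve as pure `ω`-harmonics. -/
theorem relative_vectors_harmonic (m ω : ℝ) (hm : 0 < m) (hω : 0 < ω)
    (r₁ r₂ r₃ r₄ : ℝ → Plane)
    (hsol : IsFourBodySolution ω r₁ r₂ r₃ r₄) :
    ∀ t : ℝ,
      r₁ t - r₃ t = Real.cos (ω * t) • (r₁ 0 - r₃ 0)
          + (Real.sin (ω * t) / (m * ω)) • (m • deriv r₁ 0 - m • deriv r₃ 0)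
      ∧
      r₂ t - r₄ t = Real.cos (ω * t) • (r₂ 0 - r₄ 0)
          + (Real.sin (ω * t) / (m * ω)) • (m • deriv r₂ 0 - m • deriv r₄ 0) := by
  
  obtain ⟨⟨h1, h1'⟩, ⟨h2, h2'⟩, ⟨h3, h3'⟩, ⟨h4, h4'⟩, e1, e2, e3, e4⟩ := hsol
  have key : ∀ (a b : ℝ → Plane), Differentiable ℝ a → Differentiable ℝ (deriv a) →
      Differentiable ℝ b → Differentiable ℝ (deriv b) →
      (∀ t, deriv (deriv a) t - deriv (deriv b) t = (-(ω ^ 2)) • (a t - b t)) →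
      ∀ t : ℝ, a t - b t = Real.cos (ω * t) • (a 0 - b 0)
          + (Real.sin (ω * t) / (m * ω)) • (m • deriv a 0 - m • deriv b 0) := by
    intro a b ha ha' hb hb' hode t
    set x : ℝ → Plane := fun s => a s - b s with hx
    have hdx : deriv x = fun s => deriv a s - deriv b s := by
      funext s
      exact deriv_sub (ha s) (hb s)
    have hxdiff : Differentiable ℝ x := ha.sub hb
    have hx'diff : Differentiable ℝ (deriv x) := by
      rw [hdx]; exact ha'.sub hb'
    have hxode : ∀ s, deriv (deriv x) s = (-(ω ^ 2)) • x s := by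
      intro s
      have : deriv (deriv x) s = deriv (deriv a) s - deriv (deriv b) s := by
        rw [hdx]
        exact deriv_sub (ha' s) (hb' s)
      rw [this, hode s]
    have := harmonic_unique ω hω x hxdiff hx'diff hxode t
    have hd0 : deriv x 0 = deriv a 0 - deriv b 0 := by rw [hdx]
    have h0 : x 0 = a 0 - b 0 := rfl
    rw [show a t - b t = x t from rfl, this, hd0, h0]
    congr 1
    rw [← smul_sub, smul_smul]
    congr 1
    have hm0 : m ≠ 0 := ne_of_gt hm
    have hω0 : ω ≠ 0 := ne_of_gt hω
    field_simp
  intro t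
  constructor
  · refine key r₁ r₃ h1 h1' h3 h3' (fun s => ?_) t
    rw [e1 s, e3 s, ← smul_sub]
    congr 1
    module
  · refine key r₂ r₄ h2 h2' h4 h4' (fun s => ?_) t
    rw [e2 s, e4 s, ← smul_sub]
    congr 1
    module
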